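/- Let d ≥ 2 and let f : ℝ^d → ℂ be continuous with compact support contained in the open forward cone {p ∈ ℝ^d : p⁰ > |p⃗|}. Then ∫_{ℝ^d} f(p) dp = ∫_0^∞ ( ∫_{ℝ^{d−1}} f(ω_r(p⃗), p⃗) · (2ω_r(p⃗))^{−1} dp⃗ ) dr; equivalently, Lebesgue measure on the forward cone disintegrates as ∫_0^∞ μ_r^+ dr. -/

import Mathlib

open MeasureTheory

noncomputable section

/-- Spatial part of a spacetime point. -/
def spatial {m : ℕ} (p : EuclideanSpace ℝ (Fin (m + 1))) : EuclideanSpace ℝ (Fin m) :=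
  WithLp.toLp 2 (fun j : Fin m => p j.succ)

/-- `ω_r(p⃗) = √(|p⃗|² + r)`. -/
def omg {m : ℕ} (r : ℝ) (v : EuclideanSpace ℝ (Fin m)) : ℝ :=
  Real.sqrt (‖v‖ ^ 2 + r)

/-- Embedding of `ℝ^m` onto the forward mass shell: `p⃗ ↦ (ω_r(p⃗), p⃗)`. -/
def embed {m : ℕ} (r : ℝ) (v : EuclideanSpace ℝ (Fin m)) :
    EuclideanSpace ℝ (Fin (m + 1)) :=
  WithLp.toLp 2 (Fin.cons (omg r v) v.ofLp : Fin (m + 1) → ℝ)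

/-! ### Auxiliary material -/

/-- The measurable equivalence `ℝ × ℝᵐ ≃ᵐ ℝ^(m+1)` given by `Fin.cons`. -/
def consEquiv (m : ℕ) : (ℝ × EuclideanSpace ℝ (Fin m)) ≃ᵐ EuclideanSpace ℝ (Fin (m + 1)) :=
  (MeasurableEquiv.prodCongr (MeasurableEquiv.refl ℝ)
      (MeasurableEquiv.toLp 2 (Fin m → ℝ)).symm).trans
    (((MeasurableEquiv.piFinSuccAbove (fun _ : Fin (m + 1) => ℝ) 0).symm).trans
      (MeasurableEquiv.toLp 2 (Fin (m + 1) → ℝ)))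

lemma consEquiv_apply (m : ℕ) (z : ℝ × EuclideanSpace ℝ (Fin m)) :
    consEquiv m z = (WithLp.toLp 2 (Fin.cons z.1 z.2.ofLp : Fin (m + 1) → ℝ) : EuclideanSpace ℝ (Fin (m + 1))) := by
  simp [consEquiv, MeasurableEquiv.piFinSuccAbove, Fin.insertNth_zero']
  rfl

lemma consEquiv_mp (m : ℕ) :
    MeasurePreserving (consEquiv m) ((volume : Measure ℝ).prod volume) volume := by
  have e1 : MeasurePreserving (MeasurableEquiv.toLp 2 (Fin m → ℝ)).symm volume volume :=
    EuclideanSpace.volume_preserving_symm_measurableEquiv_toLp _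
  have e3 : MeasurePreserving (MeasurableEquiv.toLp 2 (Fin (m + 1) → ℝ)) volume volume :=
    (EuclideanSpace.volume_preserving_symm_measurableEquiv_toLp _).symm
  have e2 : MeasurePreserving (MeasurableEquiv.piFinSuccAbove (fun _ : Fin (m + 1) => ℝ) 0).symm
      ((volume : Measure ℝ).prod (volume : Measure (Fin m → ℝ)))
      (volume : Measure (Fin (m + 1) → ℝ)) := by
    have h :=
      (measurePreserving_piFinSuccAbove (fun _ : Fin (m + 1) => (volume : Measure ℝ)) 0).symm
    simpa [volume_pi] using h
  exact (e3.comp e2).comp ((MeasurePreserving.id _).prod e1)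

section omgLemmas

variable {m : ℕ} (v : EuclideanSpace ℝ (Fin m))

lemma omg_pos {r : ℝ} (hr : 0 < r) : 0 < omg r v := by
  have : (0:ℝ) < ‖v‖ ^ 2 + r := by positivity
  exact Real.sqrt_pos.2 this

lemma omg_gt {r : ℝ} (hr : 0 < r) : ‖v‖ < omg r v := by
  have h0 : ‖v‖ = Real.sqrt (‖v‖ ^ 2) := by
    rw [Real.sqrt_sq (norm_nonneg v)]
  rw [h0, omg]
  exact Real.sqrt_lt_sqrt (by positivity) (by linarith)

lemma omg_image : (fun r => omg r v) '' Set.Ioi 0 = Set.Ioi ‖v‖ := by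
  ext y
  constructor
  · rintro ⟨r, hr, rfl⟩
    exact omg_gt v hr
  · intro hy
    have hy' : (0:ℝ) ≤ y := le_trans (norm_nonneg v) (le_of_lt hy)
    refine ⟨y ^ 2 - ‖v‖ ^ 2, ?_, ?_⟩
    · have h2 : ‖v‖ ^ 2 < y ^ 2 := by
        nlinarith [norm_nonneg v, Set.mem_Ioi.1 hy]
      simpa [Set.mem_Ioi] using sub_pos.2 h2
    · show omg _ v = y
      unfold omg
      rw [show ‖v‖ ^ 2 + (y ^ 2 - ‖v‖ ^ 2) = y ^ 2 by ring, Real.sqrt_sq hy']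

lemma omg_hasDeriv {r : ℝ} (hr : r ∈ Set.Ioi (0:ℝ)) :
    HasDerivWithinAt (fun r => omg r v) ((2 * omg r v)⁻¹) (Set.Ioi 0) r := by
  have h1 : HasDerivAt (fun r : ℝ => ‖v‖ ^ 2 + r) 1 r := by
    simpa using (hasDerivAt_id r).const_add (‖v‖ ^ 2)
  have h2 : HasDerivAt (fun r : ℝ => omg r v) (1 / (2 * Real.sqrt (‖v‖ ^ 2 + r)) * 1) r := by
    refine (Real.hasDerivAt_sqrt ?_).comp r h1
    have hpos : (0:ℝ) < ‖v‖ ^ 2 + r := by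
      have := Set.mem_Ioi.1 hr; positivity
    exact ne_of_gt hpos
  have heq : (1 / (2 * Real.sqrt (‖v‖ ^ 2 + r)) * 1) = (2 * omg r v)⁻¹ := by
    simp [omg, one_div]
  rw [heq] at h2
  exact h2.hasDerivWithinAt

lemma omg_injOn : Set.InjOn (fun r => omg r v) (Set.Ioi 0) := by
  intro a ha b hb hab
  simp only [Set.mem_Ioi] at ha hb
  have ha' : (0:ℝ) ≤ ‖v‖ ^ 2 + a := by positivity
  have hb' : (0:ℝ) ≤ ‖v‖ ^ 2 + b := by positivity
  have h : ‖v‖ ^ 2 + a = ‖v‖ ^ 2 + b := (Real.sqrt_inj ha' hb').1 hab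
  linarith

lemma subst_integral {F : Type*} [NormedAddCommGroup F] [NormedSpace ℝ F] (g : ℝ → F) :
    ∫ x in Set.Ioi ‖v‖, g x
      = ∫ r in Set.Ioi (0:ℝ), |(2 * omg r v)⁻¹| • g (omg r v) := by
  rw [← omg_image v]
  exact integral_image_eq_integral_abs_deriv_smul measurableSet_Ioi
    (fun r hr => omg_hasDeriv v hr) (omg_injOn v) g

lemma subst_integrableOn {F : Type*} [NormedAddCommGroup F] [NormedSpace ℝ F] (g : ℝ → F) :
    IntegrableOn g (Set.Ioi ‖v‖)
      ↔ IntegrableOn (fun r => |(2 * omg r v)⁻¹| • g (omg r v)) (Set.Ioi (0:ℝ)) := by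
  rw [← omg_image v]
  exact integrableOn_image_iff_integrableOn_abs_deriv_smul measurableSet_Ioi
    (fun r hr => omg_hasDeriv v hr) (omg_injOn v) g

end omgLemmas

/-- Lebesgue measure on the open forward cone disintegrates over the forward
mass-shell measures: `∫ f = ∫_0^∞ (∫ f dμ_r^+) dr` for continuous `f` compactly
supported in `{p : p⁰ > |p⃗|}`. -/
theorem statement3 (m : ℕ) (hm : 1 ≤ m)
    (f : EuclideanSpace ℝ (Fin (m + 1)) → ℂ)
    (hf : Continuous f) (hcs : HasCompactSupport f)
    (hsupp : tsupport f ⊆ {p | ‖spatial p‖ < p 0}) :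
    ∫ p, f p
      = ∫ r in Set.Ioi (0 : ℝ), ∫ v : EuclideanSpace ℝ (Fin m),
          f (embed r v) * (((2 * omg r v)⁻¹ : ℝ) : ℂ) := by
  -- vanishing of `f (WithLp.toLp 2 (Fin.cons x v.ofLp : Fin (m + 1) → ℝ))` for `x ≤ ‖v‖`
  have hzero : ∀ (x : ℝ) (v : EuclideanSpace ℝ (Fin m)), x ∉ Set.Ioi ‖v‖ →
      f (WithLp.toLp 2 (Fin.cons x v.ofLp : Fin (m + 1) → ℝ)) = 0 := by
    intro x v hx
    by_contra h
    have hmem : (WithLp.toLp 2 (Fin.cons x v.ofLp : Fin (m + 1) → ℝ) : EuclideanSpace ℝ (Fin (m + 1))) ∈ tsupport f :=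
      subset_tsupport f h
    have hlt := hsupp hmem
    simp only [Set.mem_setOf_eq] at hlt
    have hsp : spatial (WithLp.toLp 2 (Fin.cons x v.ofLp : Fin (m + 1) → ℝ) : EuclideanSpace ℝ (Fin (m + 1))) = v := by
      ext j
      simp [spatial, Fin.cons_succ]
    rw [hsp] at hlt
    exact hx (by simpa using hlt)
  -- the one-dimensional substitution, complex version
  have hinner : ∀ v : EuclideanSpace ℝ (Fin m),
      (∫ x : ℝ, f (WithLp.toLp 2 (Fin.cons x v.ofLp : Fin (m + 1) → ℝ)))
        = ∫ r in Set.Ioi (0:ℝ), f (embed r v) * (((2 * omg r v)⁻¹ : ℝ) : ℂ) := by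
    intro v
    rw [← setIntegral_eq_integral_of_forall_compl_eq_zero (fun x hx => hzero x v hx),
      subst_integral v (fun x => f (WithLp.toLp 2 (Fin.cons x v.ofLp : Fin (m + 1) → ℝ)))]
    refine setIntegral_congr_fun measurableSet_Ioi (fun r hr => ?_)
    have hpos : 0 < (2 * omg r v)⁻¹ := by
      have := omg_pos v (Set.mem_Ioi.1 hr); positivity
    rw [abs_of_pos hpos, Complex.real_smul, mul_comm]
    rfl
  -- the one-dimensional substitution, norm version
  have hinnernorm : ∀ v : EuclideanSpace ℝ (Fin m),
      (∫ x : ℝ, ‖f (WithLp.toLp 2 (Fin.cons x v.ofLp : Fin (m + 1) → ℝ))‖)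
        = ∫ r in Set.Ioi (0:ℝ), ‖f (embed r v) * (((2 * omg r v)⁻¹ : ℝ) : ℂ)‖ := by
    intro v
    rw [← setIntegral_eq_integral_of_forall_compl_eq_zero
        (fun x hx => by rw [hzero x v hx, norm_zero]),
      subst_integral v (fun x => ‖f (WithLp.toLp 2 (Fin.cons x v.ofLp : Fin (m + 1) → ℝ))‖)]
    refine setIntegral_congr_fun measurableSet_Ioi (fun r hr => ?_)
    have hpos : 0 < (2 * omg r v)⁻¹ := by
      have := omg_pos v (Set.mem_Ioi.1 hr); positivity
    rw [norm_mul, Complex.norm_real, Real.norm_eq_abs, smul_eq_mul, mul_comm]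
    rfl
  -- integrability on the product space
  have hfi : Integrable f volume := hf.integrable_of_hasCompactSupport hcs
  have hgi : Integrable (fun z : ℝ × EuclideanSpace ℝ (Fin m) => f (WithLp.toLp 2 (Fin.cons z.1 z.2.ofLp : Fin (m + 1) → ℝ)))
      ((volume : Measure ℝ).prod volume) := by
    have h := ((consEquiv_mp m).integrable_comp_emb
      (consEquiv m).measurableEmbedding).2 hfi
    refine h.congr (Filter.Eventually.of_forall fun z => ?_)
    rw [Function.comp_apply, consEquiv_apply]
  have hgi' : Integrable (fun z : EuclideanSpace ℝ (Fin m) × ℝ => f (WithLp.toLp 2 (Fin.cons z.2 z.1.ofLp : Fin (m + 1) → ℝ)))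
      ((volume : Measure (EuclideanSpace ℝ (Fin m))).prod volume) := hgi.swap
  -- measurability of the integrand on the product
  have hembc : Continuous (fun z : EuclideanSpace ℝ (Fin m) × ℝ =>
      (embed z.2 z.1 : EuclideanSpace ℝ (Fin (m + 1)))) := by
    have hc : Continuous (fun z : EuclideanSpace ℝ (Fin m) × ℝ => omg z.2 z.1) := by
      unfold omg
      exact Real.continuous_sqrt.comp (((continuous_fst.norm).pow 2).add continuous_snd)
    have hrepr : (fun z : EuclideanSpace ℝ (Fin m) × ℝ =>
        (embed z.2 z.1 : EuclideanSpace ℝ (Fin (m + 1))))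
      = WithLp.toLp 2 ∘
          (fun z : EuclideanSpace ℝ (Fin m) × ℝ =>
            (Fin.cons (omg z.2 z.1) (WithLp.ofLp z.1) : Fin (m + 1) → ℝ)) :=
      rfl
    rw [hrepr]
    refine (PiLp.continuous_toLp _ _).comp ?_
    refine continuous_pi fun i => ?_
    refine Fin.cases ?_ (fun j => ?_) i
    · simpa using hc
    · simp only [Fin.cons_succ]
      exact (continuous_apply j).comp ((PiLp.continuous_ofLp _ _).comp continuous_fst)
  have hGmeas : AEStronglyMeasurable
      (Function.uncurry fun (v : EuclideanSpace ℝ (Fin m)) (r : ℝ) =>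
        f (embed r v) * (((2 * omg r v)⁻¹ : ℝ) : ℂ))
      ((volume : Measure (EuclideanSpace ℝ (Fin m))).prod
        ((volume : Measure ℝ).restrict (Set.Ioi 0))) := by
    apply Measurable.aestronglyMeasurable
    have hc : Continuous (fun z : EuclideanSpace ℝ (Fin m) × ℝ => omg z.2 z.1) := by
      unfold omg
      exact Real.continuous_sqrt.comp (((continuous_fst.norm).pow 2).add continuous_snd)
    exact ((hf.comp hembc).measurable).mul
      (Complex.measurable_ofReal.comp ((continuous_const.mul hc).measurable.inv))
  -- Fubini hypothesis
  have hFint : Integrable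
      (Function.uncurry fun (v : EuclideanSpace ℝ (Fin m)) (r : ℝ) =>
        f (embed r v) * (((2 * omg r v)⁻¹ : ℝ) : ℂ))
      ((volume : Measure (EuclideanSpace ℝ (Fin m))).prod
        ((volume : Measure ℝ).restrict (Set.Ioi 0))) := by
    rw [integrable_prod_iff hGmeas]
    constructor
    · filter_upwards [hgi'.prod_right_ae] with v hv
      have h1 : IntegrableOn (fun x : ℝ => f (WithLp.toLp 2 (Fin.cons x v.ofLp : Fin (m + 1) → ℝ))) (Set.Ioi ‖v‖) := hv.integrableOn
      have h2 := (subst_integrableOn v (fun x : ℝ => f (WithLp.toLp 2 (Fin.cons x v.ofLp : Fin (m + 1) → ℝ)))).1 h1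
      refine h2.congr_fun (fun r hr => ?_) measurableSet_Ioi
      have hpos : 0 < (2 * omg r v)⁻¹ := by
        have := omg_pos v (Set.mem_Ioi.1 hr); positivity
      beta_reduce
      rw [abs_of_pos hpos, Complex.real_smul, mul_comm]
      rfl
    · have h3 := hgi'.integral_norm_prod_left
      refine h3.congr (Filter.Eventually.of_forall fun v => ?_)
      exact hinnernorm v
  -- put everything together
  calc ∫ p, f p
      = ∫ z : ℝ × EuclideanSpace ℝ (Fin m), f (WithLp.toLp 2 (Fin.cons z.1 z.2.ofLp : Fin (m + 1) → ℝ))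
          ∂((volume : Measure ℝ).prod volume) := by
        rw [← (consEquiv_mp m).integral_comp' f]
        simp only [consEquiv_apply]
    _ = ∫ v : EuclideanSpace ℝ (Fin m), ∫ x : ℝ, f (WithLp.toLp 2 (Fin.cons x v.ofLp : Fin (m + 1) → ℝ)) :=
        integral_prod_symm _ hgi
    _ = ∫ v : EuclideanSpace ℝ (Fin m), ∫ r in Set.Ioi (0:ℝ),
          f (embed r v) * (((2 * omg r v)⁻¹ : ℝ) : ℂ) :=
        integral_congr_ae (Filter.Eventually.of_forall hinner)
    _ = ∫ r in Set.Ioi (0 : ℝ), ∫ v : EuclideanSpace ℝ (Fin m),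
          f (embed r v) * (((2 * omg r v)⁻¹ : ℝ) : ℂ) :=
        integral_integral_swap hFint
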